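/- In a Hilbert plane, for every line a and every point A not on a, there exists at least one line through A that does not meet a. -/
import Mathlib


/-- A Hilbert plane: a model of Hilbert's axioms of incidence, betweenness and
congruence for plane geometry (congruence rendered via a real-valued segment
length and angle measure). -/
structure HilbertPlane where
  Point : Type
  Line : Type
  onLine : Point → Line → Prop
  btw : Point → Point → Point → Prop
  dist : Point → Point → ℝ
  angle : Point → Point → Point → ℝ
  line_exists : ∀ P Q : Point, P ≠ Q → ∃ l : Line, onLine P l ∧ onLine Q l
  line_unique : ∀ (P Q : Point) (l m : Line), P ≠ Q → onLine P l → onLine Q l →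
    onLine P m → onLine Q m → l = m
  line_two_points : ∀ l : Line, ∃ P Q : Point, P ≠ Q ∧ onLine P l ∧ onLine Q l
  exists_noncollinear : ∃ P Q R : Point,
    ∀ l : Line, ¬ (onLine P l ∧ onLine Q l ∧ onLine R l)
  btw_symm : ∀ A B C, btw A B C → btw C B A
  btw_ne : ∀ A B C, btw A B C → A ≠ B ∧ B ≠ C ∧ A ≠ C
  btw_collinear : ∀ A B C, btw A B C → ∃ l, onLine A l ∧ onLine B l ∧ onLine C l
  btw_extend : ∀ A B, A ≠ B → ∃ C, btw A B C
  btw_not_rotate : ∀ A B C, btw A B C → ¬ btw B A C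
  pasch : ∀ (A B C : Point) (l : Line),
    (∀ m : Line, ¬ (onLine A m ∧ onLine B m ∧ onLine C m)) →
    ¬ onLine A l → ¬ onLine B l → ¬ onLine C l →
    (∃ P, onLine P l ∧ btw A P B) →
    (∃ Q, onLine Q l ∧ btw A Q C) ∨ (∃ Q, onLine Q l ∧ btw B Q C)
  dist_pos : ∀ A B, A ≠ B → 0 < dist A B
  dist_self : ∀ A, dist A A = 0
  dist_symm : ∀ A B, dist A B = dist B A
  dist_btw_add : ∀ A B C, btw A B C → dist A B + dist B C = dist A C
  seg_construct : ∀ A B : Point, A ≠ B → ∀ r : ℝ, 0 < r →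
    ∃ C, (C = B ∨ btw A C B ∨ btw A B C) ∧ dist A C = r
  angle_symm : ∀ A B C, angle A B C = angle C B A
  angle_mem : ∀ A B C, A ≠ B → C ≠ B → angle A B C ∈ Set.Icc (0:ℝ) Real.pi
  angle_pos : ∀ A B C, (∀ l, ¬ (onLine A l ∧ onLine B l ∧ onLine C l)) →
    0 < angle A B C
  angle_straight : ∀ A B C, btw A B C → angle A B C = Real.pi
  angle_ray_invariant : ∀ A B C B' C' : Point,
    (B' = B ∨ btw A B' B ∨ btw A B B') →
    (C' = C ∨ btw A C' C ∨ btw A C C') →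
    angle B A C = angle B' A C'
  angle_add : ∀ A B C D : Point, A ≠ B → A ≠ C → A ≠ D →
    (∀ l : Line, onLine A l → onLine B l →
      ¬ onLine D l ∧ ¬ onLine C l ∧ ¬ ∃ Z, onLine Z l ∧ btw D Z C) →
    (∀ l : Line, onLine A l → onLine C l →
      ¬ onLine D l ∧ ¬ onLine B l ∧ ¬ ∃ Z, onLine Z l ∧ btw D Z B) →
    angle B A D + angle D A C = angle B A C
  angle_construct : ∀ θ : ℝ, 0 < θ → θ < Real.pi →
    ∀ (A B P : Point) (l : Line), A ≠ B → onLine A l → onLine B l → ¬ onLine P l →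
    ∃ C, ¬ onLine C l ∧ (¬ ∃ Z, onLine Z l ∧ btw C Z P) ∧ angle C A B = θ
  sas : ∀ A B C A' B' C' : Point,
    (∀ l, ¬ (onLine A l ∧ onLine B l ∧ onLine C l)) →
    (∀ l, ¬ (onLine A' l ∧ onLine B' l ∧ onLine C' l)) →
    dist A B = dist A' B' → dist A C = dist A' C' →
    angle B A C = angle B' A' C' →
    dist B C = dist B' C' ∧ angle A B C = angle A' B' C' ∧ angle A C B = angle A' C' B'

namespace HilbertPlane

variable (H : HilbertPlane)

/-- Three points are collinear. -/
def Collinear (A B C : H.Point) : Prop :=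
  ∃ l : H.Line, H.onLine A l ∧ H.onLine B l ∧ H.onLine C l

/-- `X` and `Y` lie (strictly) on the same side of the line `l`. -/
def SameSide (l : H.Line) (X Y : H.Point) : Prop :=
  ¬ H.onLine X l ∧ ¬ H.onLine Y l ∧ ¬ ∃ Z, H.onLine Z l ∧ H.btw X Z Y

/-- `X` and `Y` lie on opposite sides of the line `l`. -/
def OppSide (l : H.Line) (X Y : H.Point) : Prop :=
  ¬ H.onLine X l ∧ ¬ H.onLine Y l ∧ ∃ Z, H.onLine Z l ∧ H.btw X Z Y

/-- `X` lies on the ray from `A` through `B`. -/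
def OnRay (A B X : H.Point) : Prop :=
  X = B ∨ H.btw A X B ∨ H.btw A B X

/-- The ray from `A` through `B` meets the line `a`. -/
def RayMeets (A B : H.Point) (a : H.Line) : Prop :=
  ∃ X, H.OnRay A B X ∧ H.onLine X a

/-- Two lines meet. -/
def LinesMeet (a b : H.Line) : Prop := ∃ X, H.onLine X a ∧ H.onLine X b

/-- `Q` is the foot of the perpendicular from `P` to the line `a`. -/
def FootPerp (P Q : H.Point) (a : H.Line) : Prop :=
  H.onLine Q a ∧ ∀ R, H.onLine R a → R ≠ Q → H.angle P Q R = Real.pi / 2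

/-- `D` lies strictly inside the angle `∠ X P Y`. -/
def InsideAngle (P X Y D : H.Point) : Prop :=
  (∀ l, H.onLine P l → H.onLine X l → H.SameSide l D Y) ∧
  (∀ l, H.onLine P l → H.onLine Y l → H.SameSide l D X)

/-- Lobachevsky's axiom: through any point outside a line there are two rays, not
on one line, not meeting the line, such that every ray inside the angle they form
meets the line. -/
def Lobachevsky : Prop :=
  ∀ (a : H.Line) (A : H.Point), ¬ H.onLine A a →
    ∃ B C : H.Point, ¬ H.Collinear B A C ∧
      ¬ H.RayMeets A B a ∧ ¬ H.RayMeets A C a ∧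
      ∀ D, H.InsideAngle A B C D → H.RayMeets A D a

/-- The ray from `P` through `B` is a limiting parallel ray to the line `a`,
where `Q` is the foot of the perpendicular from `P` to `a`: it does not meet `a`,
but every ray from `P` strictly inside the angle `∠ B P Q` meets `a`. -/
def LimitingParallelRay (a : H.Line) (P Q B : H.Point) : Prop :=
  H.FootPerp P Q a ∧ ¬ H.RayMeets P B a ∧
    ∀ D, H.InsideAngle P B Q D → H.RayMeets P D a

/-- The Archimedean axiom for segments. -/
def ArchimedeanAx : Prop :=
  ∀ A B C D : H.Point, A ≠ B → ∃ n : ℕ, H.dist C D < n * H.dist A B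

end HilbertPlane
namespace HilbertPlane

variable {H : HilbertPlane}

/-- Noncollinearity in the universally-quantified form used by the axioms. -/
def NCol (H : HilbertPlane) (A B C : H.Point) : Prop :=
  ∀ l : H.Line, ¬ (H.onLine A l ∧ H.onLine B l ∧ H.onLine C l)

lemma ncol_off {A B C : H.Point} (h : H.NCol A B C) {l : H.Line}
    (hA : H.onLine A l) (hB : H.onLine B l) : ¬ H.onLine C l :=
  fun hC => h l ⟨hA, hB, hC⟩

lemma btw_ne12 {A B C : H.Point} (h : H.btw A B C) : A ≠ B := (H.btw_ne A B C h).1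
lemma btw_ne23 {A B C : H.Point} (h : H.btw A B C) : B ≠ C := (H.btw_ne A B C h).2.1
lemma btw_ne13 {A B C : H.Point} (h : H.btw A B C) : A ≠ C := (H.btw_ne A B C h).2.2

lemma btw_asymm1 {A B C : H.Point} (h : H.btw A B C) : ¬ H.btw B A C :=
  H.btw_not_rotate A B C h

lemma btw_asymm2 {A B C : H.Point} (h : H.btw A B C) : ¬ H.btw A C B :=
  fun h' => H.btw_not_rotate C B A (H.btw_symm A B C h) (H.btw_symm A C B h')

/-- Two distinct lines meet in at most one point. -/
lemma inter_unique {l m : H.Line} {X Y : H.Point} (hne : l ≠ m)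
    (hXl : H.onLine X l) (hXm : H.onLine X m) (hYl : H.onLine Y l) (hYm : H.onLine Y m) :
    X = Y := by
  by_contra h
  exact hne (H.line_unique X Y l m h hXl hYl hXm hYm)

lemma btw_mem {A B C : H.Point} {l : H.Line} (h : H.btw A B C)
    (hA : H.onLine A l) (hC : H.onLine C l) : H.onLine B l := by
  obtain ⟨l', h1, h2, h3⟩ := H.btw_collinear A B C h
  rwa [H.line_unique A C l' l (btw_ne13 h) h1 h3 hA hC] at h2

lemma btw_mem_right {A B C : H.Point} {l : H.Line} (h : H.btw A B C)
    (hA : H.onLine A l) (hB : H.onLine B l) : H.onLine C l := by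
  obtain ⟨l', h1, h2, h3⟩ := H.btw_collinear A B C h
  rwa [H.line_unique A B l' l (btw_ne12 h) h1 h2 hA hB] at h3

lemma btw_mem_left {A B C : H.Point} {l : H.Line} (h : H.btw A B C)
    (hB : H.onLine B l) (hC : H.onLine C l) : H.onLine A l :=
  btw_mem_right (H.btw_symm A B C h) hC hB

lemma exists_off_line (l : H.Line) : ∃ D : H.Point, ¬ H.onLine D l := by
  obtain ⟨P, Q, R, h⟩ := H.exists_noncollinear
  by_cases hP : H.onLine P l
  · by_cases hQ : H.onLine Q l
    · exact ⟨R, fun hR => h l ⟨hP, hQ, hR⟩⟩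
    · exact ⟨Q, hQ⟩
  · exact ⟨P, hP⟩

/-- Line-order trichotomy (Hilbert's Theorem 4): of three distinct collinear
points, one lies between the other two. -/
theorem btw_tri {A B C : H.Point} {g : H.Line}
    (hAg : H.onLine A g) (hBg : H.onLine B g) (hCg : H.onLine C g)
    (hAB : A ≠ B) (hBC : B ≠ C) (hAC : A ≠ C) :
    H.btw A B C ∨ H.btw B A C ∨ H.btw A C B := by
  by_cases h1 : H.btw B A C
  · exact Or.inr (Or.inl h1)
  by_cases h2 : H.btw A C B
  · exact Or.inr (Or.inr h2)
  left
  obtain ⟨D, hDg⟩ := exists_off_line (H := H) g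
  have hBD : B ≠ D := fun e => hDg (e ▸ hBg)
  obtain ⟨E, hE⟩ := H.btw_extend B D hBD
  have hDE : D ≠ E := btw_ne23 hE
  have hBE : B ≠ E := btw_ne13 hE
  have hAD : A ≠ D := fun e => hDg (e ▸ hAg)
  have hCD : C ≠ D := fun e => hDg (e ▸ hCg)
  obtain ⟨lBD, hB1, hD1⟩ := H.line_exists B D hBD
  have hE1 : H.onLine E lBD := btw_mem_right hE hB1 hD1
  have hEg : ¬ H.onLine E g := by
    intro hEg'
    exact hDg (H.line_unique B E lBD g hBE hB1 hE1 hBg hEg' ▸ hD1)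
  obtain ⟨lAD, hA2, hD2⟩ := H.line_exists A D hAD
  obtain ⟨lCD, hC3, hD3⟩ := H.line_exists C D hCD
  have hgAD : lAD ≠ g := fun e => hDg (e ▸ hD2)
  have hgCD : lCD ≠ g := fun e => hDg (e ▸ hD3)
  have hBlAD : ¬ H.onLine B lAD := fun h => hAB (inter_unique hgAD hA2 hAg h hBg)
  have hClAD : ¬ H.onLine C lAD := fun h => hAC (inter_unique hgAD hA2 hAg h hCg)
  have hElAD : ¬ H.onLine E lAD := by
    intro h
    exact hBlAD (H.line_unique D E lAD lBD hDE hD2 h hD1 hE1 ▸ hB1)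
  have ncBEC : ∀ m, ¬ (H.onLine B m ∧ H.onLine E m ∧ H.onLine C m) := by
    rintro m ⟨hm1, hm2, hm3⟩
    exact hEg (H.line_unique B C m g hBC hm1 hm3 hBg hCg ▸ hm2)
  have hp1 := H.pasch B E C lAD ncBEC hBlAD hElAD hClAD ⟨D, hD2, hE⟩
  have hF : ∃ F, H.onLine F lAD ∧ H.btw E F C := by
    rcases hp1 with ⟨Q, hQ, hbQ⟩ | ⟨Q, hQ, hbQ⟩
    · exfalso
      have hQg : H.onLine Q g := btw_mem hbQ hBg hCg
      exact h1 (inter_unique hgAD hQ hQg hA2 hAg ▸ hbQ)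
    · exact ⟨Q, hQ, hbQ⟩
  obtain ⟨F, hF4, hbF⟩ := hF
  have hEF : E ≠ F := btw_ne12 hbF
  have hFC : F ≠ C := btw_ne23 hbF
  have hEC : E ≠ C := btw_ne13 hbF
  obtain ⟨lEC, hE6, hC6⟩ := H.line_exists E C hEC
  have hF6 : H.onLine F lEC := btw_mem hbF hE6 hC6
  have hBlCD : ¬ H.onLine B lCD := fun h => hBC (inter_unique hgCD hC3 hCg h hBg).symm
  have hAlCD : ¬ H.onLine A lCD := fun h => hAC (inter_unique hgCD hC3 hCg h hAg).symm
  have hElCD : ¬ H.onLine E lCD := by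
    intro h
    exact hBlCD (H.line_unique D E lCD lBD hDE hD3 h hD1 hE1 ▸ hB1)
  have ncBEA : ∀ m, ¬ (H.onLine B m ∧ H.onLine E m ∧ H.onLine A m) := by
    rintro m ⟨hm1, hm2, hm3⟩
    exact hEg (H.line_unique B A m g (Ne.symm hAB) hm1 hm3 hBg hAg ▸ hm2)
  have hp2 := H.pasch B E A lCD ncBEA hBlCD hElCD hAlCD ⟨D, hD3, hE⟩
  have hG : ∃ G, H.onLine G lCD ∧ H.btw E G A := by
    rcases hp2 with ⟨Q, hQ, hbQ⟩ | ⟨Q, hQ, hbQ⟩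
    · exfalso
      have hQg : H.onLine Q g := btw_mem hbQ hBg hAg
      have hQC : Q = C := inter_unique hgCD hQ hQg hC3 hCg
      exact h2 (H.btw_symm B C A (hQC ▸ hbQ))
    · exact ⟨Q, hQ, hbQ⟩
  obtain ⟨G, hG5, hbG⟩ := hG
  have hFA : F ≠ A := by
    rintro rfl
    exact hEg (btw_mem_left hbF hAg hCg)
  have hFD : F ≠ D := by
    rintro rfl
    have : lEC = lBD := H.line_unique _ E lEC lBD hDE hF6 hE6 hD1 hE1
    have hClBD : H.onLine C lBD := this ▸ hC6
    exact hDg (H.line_unique B C lBD g hBC hB1 hClBD hBg hCg ▸ hD1)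
  have hFlCD : ¬ H.onLine F lCD := by
    intro h
    exact hAlCD (H.line_unique D F lAD lCD (Ne.symm hFD) hD2 hF4 hD3 h ▸ hA2)
  have ncAEF : ∀ m, ¬ (H.onLine A m ∧ H.onLine E m ∧ H.onLine F m) := by
    rintro m ⟨hm1, hm2, hm3⟩
    exact hElAD (H.line_unique A F m lAD (Ne.symm hFA) hm1 hm3 hA2 hF4 ▸ hm2)
  have hp3 := H.pasch A E F lCD ncAEF hAlCD hElCD hFlCD ⟨G, hG5, H.btw_symm E G A hbG⟩
  have hH : ∃ Hp, H.onLine Hp lCD ∧ H.btw A Hp F := by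
    rcases hp3 with ⟨Q, hQ, hbQ⟩ | ⟨Q, hQ, hbQ⟩
    · exact ⟨Q, hQ, hbQ⟩
    · exfalso
      have hQ6 : H.onLine Q lEC := btw_mem hbQ hE6 hF6
      have hlECCD : lEC ≠ lCD := fun e => hElCD (e ▸ hE6)
      have hQC : Q = C := inter_unique hlECCD hQ6 hQ hC6 hC3
      exact btw_asymm2 hbF (hQC ▸ hbQ)
  obtain ⟨Hp, hHp, hbHp⟩ := hH
  have hHlAD : H.onLine Hp lAD := btw_mem hbHp hA2 hF4
  have hADCD : lAD ≠ lCD := fun e => hAlCD (e ▸ hA2)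
  have hbADF : H.btw A D F := inter_unique hADCD hHlAD hHp hD2 hD3 ▸ hbHp
  have hFg : ¬ H.onLine F g := fun h => hFA (inter_unique hgAD hF4 h hA2 hAg)
  have hAlBD : ¬ H.onLine A lBD :=
    fun h => hDg (H.line_unique A B lBD g hAB h hB1 hAg hBg ▸ hD1)
  have hClBD : ¬ H.onLine C lBD :=
    fun h => hDg (H.line_unique B C lBD g hBC hB1 h hBg hCg ▸ hD1)
  have hFlBD : ¬ H.onLine F lBD := by
    intro h
    exact hBlAD (H.line_unique D F lBD lAD (Ne.symm hFD) hD1 h hD2 hF4 ▸ hB1)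
  have ncAFC : ∀ m, ¬ (H.onLine A m ∧ H.onLine F m ∧ H.onLine C m) := by
    rintro m ⟨hm1, hm2, hm3⟩
    exact hFg (H.line_unique A C m g hAC hm1 hm3 hAg hCg ▸ hm2)
  have hp4 := H.pasch A F C lBD ncAFC hAlBD hFlBD hClBD ⟨D, hD1, hbADF⟩
  rcases hp4 with ⟨Q, hQ, hbQ⟩ | ⟨Q, hQ, hbQ⟩
  · have hQg : H.onLine Q g := btw_mem hbQ hAg hCg
    have hlBDg : lBD ≠ g := fun e => hDg (e ▸ hD1)
    exact inter_unique hlBDg hQ hQg hB1 hBg ▸ hbQ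
  · exfalso
    have hQ6 : H.onLine Q lEC := btw_mem hbQ hF6 hC6
    have hlBDEC : lBD ≠ lEC := fun e => hClBD (e ▸ hC6)
    have hQE : Q = E := inter_unique hlBDEC hQ hQ6 hE1 hE6
    exact H.btw_not_rotate E F C hbF (hQE ▸ hbQ)

end HilbertPlane
namespace HilbertPlane

variable {H : HilbertPlane}

lemma btw_of_dist {A B C : H.Point} {g : H.Line}
    (hAg : H.onLine A g) (hBg : H.onLine B g) (hCg : H.onLine C g)
    (hAB : A ≠ B) (hBC : B ≠ C) (hAC : A ≠ C)
    (hd : H.dist A B + H.dist B C = H.dist A C) : H.btw A B C := by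
  rcases btw_tri hAg hBg hCg hAB hBC hAC with h | h | h
  · exact h
  · exfalso
    have e := H.dist_btw_add B A C h
    have p := H.dist_pos A B hAB
    have s := H.dist_symm A B
    linarith
  · exfalso
    have e := H.dist_btw_add A C B h
    have p := H.dist_pos B C hBC
    have s := H.dist_symm B C
    linarith

/-- Four-point lemma (a): metric version. -/
lemma btw_pa {A B C D : H.Point} (h1 : H.btw A B D) (h2 : H.btw B C D) :
    H.btw A B C ∧ H.btw A C D := by
  obtain ⟨g, hAg, hBg, hDg⟩ := H.btw_collinear A B D h1
  have hCg : H.onLine C g := btw_mem h2 hBg hDg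
  obtain ⟨hAB, hBD, hAD⟩ := H.btw_ne A B D h1
  obtain ⟨hBC, hCD, hBD2⟩ := H.btw_ne B C D h2
  have hAC : A ≠ C := by rintro rfl; exact btw_asymm1 h1 h2
  have e1 := H.dist_btw_add A B D h1
  have e2 := H.dist_btw_add B C D h2
  have pAB := H.dist_pos A B hAB
  have pBC := H.dist_pos B C hBC
  have pCD := H.dist_pos C D hCD
  have pAC := H.dist_pos A C hAC
  have pAD := H.dist_pos A D hAD
  have pBD := H.dist_pos B D hBD
  have sAB := H.dist_symm A B
  have sAC := H.dist_symm A C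
  have sAD := H.dist_symm A D
  have sBC := H.dist_symm B C
  have sBD := H.dist_symm B D
  have sCD := H.dist_symm C D
  have hABC : H.btw A B C := by
    rcases btw_tri hAg hBg hCg hAB hBC hAC with h | h | h
    · exact h
    · exfalso
      have e3 := H.dist_btw_add B A C h
      rcases btw_tri hAg hCg hDg hAC hCD hAD with h4 | h4 | h4 <;>
        [ (have e4 := H.dist_btw_add A C D h4);
          (have e4 := H.dist_btw_add C A D h4);
          (have e4 := H.dist_btw_add A D C h4)] <;> linarith
    · exfalso
      have e3 := H.dist_btw_add A C B h
      rcases btw_tri hAg hCg hDg hAC hCD hAD with h4 | h4 | h4 <;>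
        [ (have e4 := H.dist_btw_add A C D h4);
          (have e4 := H.dist_btw_add C A D h4);
          (have e4 := H.dist_btw_add A D C h4)] <;> linarith
  refine ⟨hABC, ?_⟩
  have e0 := H.dist_btw_add A B C hABC
  rcases btw_tri hAg hCg hDg hAC hCD hAD with h | h | h
  · exact h
  · exfalso; have e3 := H.dist_btw_add C A D h; linarith
  · exfalso; have e3 := H.dist_btw_add A D C h; linarith

/-- Four-point lemma (b2): metric version. -/
lemma btw_pb2 {A B C D : H.Point} (h1 : H.btw A B C) (h2 : H.btw A C D) :
    H.btw A B D ∧ H.btw B C D := by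
  obtain ⟨g, hAg, hBg, hCg⟩ := H.btw_collinear A B C h1
  have hDg : H.onLine D g := btw_mem_right h2 hAg hCg
  obtain ⟨hAB, hBC, hAC⟩ := H.btw_ne A B C h1
  obtain ⟨hAC2, hCD, hAD⟩ := H.btw_ne A C D h2
  have hBD : B ≠ D := by rintro rfl; exact btw_asymm2 h1 h2
  have e1 := H.dist_btw_add A B C h1
  have e2 := H.dist_btw_add A C D h2
  have pAB := H.dist_pos A B hAB
  have pBC := H.dist_pos B C hBC
  have pCD := H.dist_pos C D hCD
  have pAC := H.dist_pos A C hAC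
  have pAD := H.dist_pos A D hAD
  have pBD := H.dist_pos B D hBD
  have sAB := H.dist_symm A B
  have sAC := H.dist_symm A C
  have sAD := H.dist_symm A D
  have sBC := H.dist_symm B C
  have sBD := H.dist_symm B D
  have sCD := H.dist_symm C D
  have hBCD : H.btw B C D := by
    rcases btw_tri hBg hCg hDg hBC hCD hBD with h | h | h
    · exact h
    · exfalso
      have e3 := H.dist_btw_add C B D h
      rcases btw_tri hAg hBg hDg hAB hBD hAD with h4 | h4 | h4 <;>
        [ (have e4 := H.dist_btw_add A B D h4);
          (have e4 := H.dist_btw_add B A D h4);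
          (have e4 := H.dist_btw_add A D B h4)] <;> linarith
    · exfalso
      have e3 := H.dist_btw_add B D C h
      rcases btw_tri hAg hBg hDg hAB hBD hAD with h4 | h4 | h4 <;>
        [ (have e4 := H.dist_btw_add A B D h4);
          (have e4 := H.dist_btw_add B A D h4);
          (have e4 := H.dist_btw_add A D B h4)] <;> linarith
  refine ⟨?_, hBCD⟩
  have e3 := H.dist_btw_add B C D hBCD
  rcases btw_tri hAg hBg hDg hAB hBD hAD with h | h | h
  · exact h
  · exfalso; have e4 := H.dist_btw_add B A D h; linarith
  · exfalso; have e4 := H.dist_btw_add A D B h; linarith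

lemma sameSide_symm {l : H.Line} {X Y : H.Point} (h : H.SameSide l X Y) :
    H.SameSide l Y X :=
  ⟨h.2.1, h.1, fun ⟨Z, hZ, hb⟩ => h.2.2 ⟨Z, hZ, H.btw_symm Y Z X hb⟩⟩

lemma cross_of_sameSide_cross {l : H.Line} {X Y F : H.Point}
    (hXY : H.SameSide l X Y) (hF : ¬ H.onLine F l) (hnc : H.NCol X F Y)
    (hcr : ∃ U, H.onLine U l ∧ H.btw X U F) :
    ∃ U, H.onLine U l ∧ H.btw Y U F := by
  rcases H.pasch X F Y l hnc hXY.1 hF hXY.2.1 hcr with ⟨Q, h1, h2⟩ | ⟨Q, h1, h2⟩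
  · exact absurd ⟨Q, h1, h2⟩ hXY.2.2
  · exact ⟨Q, h1, H.btw_symm F Q Y h2⟩

/-- A line cannot cross all three sides of a triangle: if it crosses the
segments from `B` to `F` and from `B` to `D`, then `F`, `D` are on the same side. -/
lemma sameSide_of_cross_cross {l : H.Line} {B F D V W : H.Point}
    (hB : ¬ H.onLine B l) (hF : ¬ H.onLine F l) (hD : ¬ H.onLine D l)
    (hnc : H.NCol F B D)
    (hV : H.onLine V l) (hbV : H.btw B V F)
    (hW : H.onLine W l) (hbW : H.btw B W D) :
    H.SameSide l F D := by
  refine ⟨hF, hD, ?_⟩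
  rintro ⟨U, hU, hbU⟩
  have hBF : B ≠ F := btw_ne13 hbV
  have hBD : B ≠ D := btw_ne13 hbW
  have hFD : F ≠ D := btw_ne13 hbU
  obtain ⟨lBF, hBa, hFa⟩ := H.line_exists B F hBF
  obtain ⟨lBD, hBb, hDb⟩ := H.line_exists B D hBD
  obtain ⟨lFD, hFc, hDc⟩ := H.line_exists F D hFD
  have hVa : H.onLine V lBF := btw_mem hbV hBa hFa
  have hWb : H.onLine W lBD := btw_mem hbW hBb hDb
  have hUc : H.onLine U lFD := btw_mem hbU hFc hDc
  have ne1 : lBF ≠ lBD := fun e => hnc lBD ⟨e ▸ hFa, hBb, hDb⟩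
  have ne2 : lBF ≠ lFD := fun e => hnc lBF ⟨hFa, hBa, e ▸ hDc⟩
  have ne3 : lBD ≠ lFD := fun e => hnc lBD ⟨e ▸ hFc, hBb, hDb⟩
  have hVW : V ≠ W := by
    rintro rfl
    exact hB (inter_unique ne1 hVa hWb hBa hBb ▸ hV)
  have hVU : V ≠ U := by
    rintro rfl
    exact hF (inter_unique ne2 hVa hUc hFa hFc ▸ hV)
  have hWU : W ≠ U := by
    rintro rfl
    exact hD (inter_unique ne3 hWb hUc hDb hDc ▸ hW)
  have hVnc : ¬ H.onLine V lFD := by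
    intro h
    exact hF (inter_unique ne2 hVa h hFa hFc ▸ hV)
  have hWnc : ¬ H.onLine W lFD := by
    intro h
    exact hD (inter_unique ne3 hWb h hDb hDc ▸ hW)
  have hVlBD : ¬ H.onLine V lBD := by
    intro h
    exact hB (inter_unique ne1 hVa h hBa hBb ▸ hV)
  have hWlBF : ¬ H.onLine W lBF := by
    intro h
    exact hB (inter_unique ne1 h hWb hBa hBb ▸ hW)
  have hUlBF : ¬ H.onLine U lBF := by
    intro h
    exact hF (inter_unique ne2 h hUc hFa hFc ▸ hU)
  have hUlBD : ¬ H.onLine U lBD := by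
    intro h
    exact hD (inter_unique ne3 h hUc hDb hDc ▸ hU)
  rcases btw_tri hV hU hW hVU (Ne.symm hWU) hVW with ht | ht | ht
  · -- btw V U W : Pasch on triangle (V, W, B) with line lFD
    have nc' : ∀ m, ¬ (H.onLine V m ∧ H.onLine W m ∧ H.onLine B m) := by
      rintro m ⟨hm1, hm2, hm3⟩
      exact hB (H.line_unique V W m l hVW hm1 hm2 hV hW ▸ hm3)
    have hBnc : ¬ H.onLine B lFD := fun h => hnc lFD ⟨hFc, h, hDc⟩
    rcases H.pasch V W B lFD nc' hVnc hWnc hBnc ⟨U, hUc, ht⟩ with ⟨Q, hQ, hbQ⟩ | ⟨Q, hQ, hbQ⟩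
    · have hQa : H.onLine Q lBF := btw_mem hbQ hVa hBa
      have : Q = F := inter_unique ne2.symm hQ hQa hFc hFa
      exact H.btw_not_rotate F V B (H.btw_symm B V F hbV) (this ▸ hbQ)
    · have hQb : H.onLine Q lBD := btw_mem hbQ hWb hBb
      have : Q = D := inter_unique ne3.symm hQ hQb hDc hDb
      exact H.btw_not_rotate D W B (H.btw_symm B W D hbW) (this ▸ hbQ)
  · -- btw U V W : Pasch on triangle (U, W, D) with line lBF
    have nc' : ∀ m, ¬ (H.onLine U m ∧ H.onLine W m ∧ H.onLine D m) := by
      rintro m ⟨hm1, hm2, hm3⟩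
      exact hD (H.line_unique U W m l hWU.symm hm1 hm2 hU hW ▸ hm3)
    have hDnc : ¬ H.onLine D lBF := fun h => hnc lBF ⟨hFa, hBa, h⟩
    rcases H.pasch U W D lBF nc' hUlBF hWlBF hDnc ⟨V, hVa, ht⟩ with ⟨Q, hQ, hbQ⟩ | ⟨Q, hQ, hbQ⟩
    · have hQc : H.onLine Q lFD := btw_mem hbQ hUc hDc
      have : Q = F := inter_unique ne2 hQ hQc hFa hFc
      exact H.btw_not_rotate F U D hbU (this ▸ hbQ)
    · have hQb : H.onLine Q lBD := btw_mem hbQ hWb hDb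
      have : Q = B := inter_unique ne1 hQ hQb hBa hBb
      exact H.btw_not_rotate B W D hbW (this ▸ hbQ)
  · -- btw V W U : Pasch on triangle (U, V, F) with line lBD
    have nc' : ∀ m, ¬ (H.onLine U m ∧ H.onLine V m ∧ H.onLine F m) := by
      rintro m ⟨hm1, hm2, hm3⟩
      exact hF (H.line_unique U V m l hVU.symm hm1 hm2 hU hV ▸ hm3)
    have hFnc : ¬ H.onLine F lBD := fun h => hnc lBD ⟨h, hBb, hDb⟩
    rcases H.pasch U V F lBD nc' hUlBD hVlBD hFnc ⟨W, hWb, H.btw_symm V W U ht⟩ with ⟨Q, hQ, hbQ⟩ | ⟨Q, hQ, hbQ⟩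
    · have hQc : H.onLine Q lFD := btw_mem hbQ hUc hFc
      have : Q = D := inter_unique ne3 hQ hQc hDb hDc
      exact H.btw_not_rotate D U F (H.btw_symm F U D hbU) (this ▸ hbQ)
    · have hQa : H.onLine Q lBF := btw_mem hbQ hVa hFa
      have : Q = B := inter_unique ne1.symm hQ hQa hBb hBa
      exact H.btw_not_rotate B V F hbV (this ▸ hbQ)

end HilbertPlane
namespace HilbertPlane

variable {H : HilbertPlane}

/-- Same-sidedness is transitive (general version, including collinear points). -/
lemma sameSide_trans {l : H.Line} {X Y Z : H.Point}
    (h1 : H.SameSide l X Y) (h2 : H.SameSide l Y Z) : H.SameSide l X Z := by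
  by_cases hXZ : X = Z
  · exact ⟨h1.1, hXZ ▸ h1.1, fun ⟨U, hU, hb⟩ => (btw_ne13 hb) (hXZ ▸ rfl)⟩
  by_cases hXY : X = Y
  · exact hXY ▸ h2
  by_cases hYZ : Y = Z
  · exact hYZ ▸ h1
  by_cases hcol : H.Collinear X Y Z
  · -- collinear case
    obtain ⟨g, hXg, hYg, hZg⟩ := hcol
    obtain ⟨P1, Q1, hPQ, hP1, hQ1⟩ := H.line_two_points l
    have hEx : ∃ E, H.onLine E l ∧ ¬ H.onLine E g := by
      by_cases hP : H.onLine P1 g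
      · refine ⟨Q1, hQ1, fun hQ => ?_⟩
        exact h1.1 (H.line_unique P1 Q1 l g hPQ hP1 hQ1 hP hQ ▸ hXg)
      · exact ⟨P1, hP1, hP⟩
    obtain ⟨E, hEl, hEg⟩ := hEx
    have hXE : X ≠ E := fun e => h1.1 (e ▸ hEl)
    obtain ⟨F, hbF⟩ := H.btw_extend X E hXE
    have hFl : ¬ H.onLine F l := by
      intro h
      exact h1.1 (btw_mem_left hbF hEl h)
    have hFg : ¬ H.onLine F g := by
      intro h
      have hXF : X ≠ F := btw_ne13 hbF
      obtain ⟨lXF, ha, hb⟩ := H.line_exists X F hXF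
      have hEXF : H.onLine E lXF := btw_mem hbF ha hb
      exact hEg (H.line_unique X F lXF g hXF ha hb hXg h ▸ hEXF)
    have nc1 : H.NCol X F Y := by
      rintro m ⟨hm1, hm2, hm3⟩
      exact hFg (H.line_unique X Y m g hXY hm1 hm3 hXg hYg ▸ hm2)
    have cr1 : ∃ U, H.onLine U l ∧ H.btw Y U F :=
      cross_of_sameSide_cross h1 hFl nc1 ⟨E, hEl, hbF⟩
    have nc2 : H.NCol Y F Z := by
      rintro m ⟨hm1, hm2, hm3⟩
      exact hFg (H.line_unique Y Z m g hYZ hm1 hm3 hYg hZg ▸ hm2)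
    have cr2 : ∃ U, H.onLine U l ∧ H.btw Z U F :=
      cross_of_sameSide_cross h2 hFl nc2 cr1
    obtain ⟨U1, hU1, hb1⟩ := cr1
    obtain ⟨U2, hU2, hb2⟩ := cr2
    have nc3 : H.NCol X F Z := by
      rintro m ⟨hm1, hm2, hm3⟩
      exact hFg (H.line_unique X Z m g hXZ hm1 hm3 hXg hZg ▸ hm2)
    exact sameSide_of_cross_cross hFl h1.1 h2.2.1 nc3 hEl
      (H.btw_symm X E F hbF) hU2 (H.btw_symm Z U2 F hb2)
  · -- noncollinear case
    refine ⟨h1.1, h2.2.1, ?_⟩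
    rintro ⟨U, hU, hb⟩
    have nc : H.NCol X Z Y := fun m ⟨hm1, hm2, hm3⟩ => hcol ⟨m, hm1, hm3, hm2⟩
    rcases H.pasch X Z Y l nc h1.1 h2.2.1 h1.2.1 ⟨U, hU, hb⟩ with ⟨Q, hQ, hbQ⟩ | ⟨Q, hQ, hbQ⟩
    · exact h1.2.2 ⟨Q, hQ, hbQ⟩
    · exact h2.2.2 ⟨Q, hQ, H.btw_symm Z Q Y hbQ⟩

/-- Four-point lemma (b1), using Pasch and plane separation. -/
lemma btw_pb1 {A B C D : H.Point} (h1 : H.btw A B C) (h2 : H.btw B C D) :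
    H.btw A C D := by
  obtain ⟨g, hAg, hBg, hCg⟩ := H.btw_collinear A B C h1
  have hDg : H.onLine D g := btw_mem_right h2 hBg hCg
  obtain ⟨hAB, hBC, hAC⟩ := H.btw_ne A B C h1
  obtain ⟨hBC2, hCD, hBD⟩ := H.btw_ne B C D h2
  have hAD : A ≠ D := by
    rintro rfl
    exact btw_asymm2 h1 (H.btw_symm B C A h2)
  rcases btw_tri hAg hCg hDg hAC hCD hAD with h | h | h
  · exact h
  · exfalso
    have := (btw_pa (H.btw_symm C A D h) h1).2
    exact H.btw_not_rotate B C D h2 (H.btw_symm D B C this)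
  · exfalso
    -- h : btw A D C; separation argument with an auxiliary line through C
    obtain ⟨E, hEg⟩ := exists_off_line (H := H) g
    have hCE : C ≠ E := fun e => hEg (e ▸ hCg)
    obtain ⟨hl, hChl, hEhl⟩ := H.line_exists C E hCE
    have hlg : hl ≠ g := fun e => hEg (e ▸ hEhl)
    have hAhl : ¬ H.onLine A hl := fun hh => hAC (inter_unique hlg hh hAg hChl hCg)
    have hBhl : ¬ H.onLine B hl := fun hh => hBC (inter_unique hlg hh hBg hChl hCg)
    have hDhl : ¬ H.onLine D hl := fun hh => hCD (inter_unique hlg hh hDg hChl hCg).symm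
    have sameBA : H.SameSide hl B A := by
      refine ⟨hBhl, hAhl, ?_⟩
      rintro ⟨Z, hZ, hb⟩
      have hZg : H.onLine Z g := btw_mem hb hBg hAg
      have hZC : Z = C := inter_unique hlg hZ hZg hChl hCg
      exact btw_asymm2 h1 (H.btw_symm B C A (hZC ▸ hb))
    have sameAD : H.SameSide hl A D := by
      refine ⟨hAhl, hDhl, ?_⟩
      rintro ⟨Z, hZ, hb⟩
      have hZg : H.onLine Z g := btw_mem hb hAg hDg
      have hZC : Z = C := inter_unique hlg hZ hZg hChl hCg
      exact btw_asymm2 h (hZC ▸ hb)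
    exact (sameSide_trans sameBA sameAD).2.2 ⟨C, hChl, h2⟩

end HilbertPlane
namespace HilbertPlane

variable {H : HilbertPlane}

lemma onRay_refl {A B : H.Point} : H.OnRay A B B := Or.inl rfl

lemma onRay_mem {A B X : H.Point} {l : H.Line} (h : H.OnRay A B X)
    (hA : H.onLine A l) (hB : H.onLine B l) : H.onLine X l := by
  rcases h with rfl | h | h
  · exact hB
  · exact btw_mem h hA hB
  · exact btw_mem_right h hA hB

/-- If `C` is on the ray from `M` through `W` and `M` is between `X` and `W`,
then `M` is between `X` and `C`. -/
lemma btw_ray_extend {X M W C : H.Point} (h : H.btw X M W) (hray : H.OnRay M W C) :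
    H.btw X M C := by
  rcases hray with rfl | hc | hc
  · exact h
  · exact (btw_pa h hc).1
  · exact (btw_pb2 h (btw_pb1 h hc)).1

/-- If `X` is on the ray from `M` through `B` and `M` is between `B` and `C`,
then `M` is between `X` and `C`. -/
lemma btw_ray_opp {M B C X : H.Point} (h : H.OnRay M B X) (hXM : X ≠ M)
    (hb : H.btw B M C) : H.btw X M C := by
  rcases h with rfl | h | h
  · exact hb
  · exact (btw_pb2 (H.btw_symm M X B h) hb).2
  · exact btw_pb1 (H.btw_symm M B X h) hb

lemma btw_transfer {M A A' X Y : H.Point} (hb : H.btw A M A')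
    (hX : H.OnRay M A X) (hXM : X ≠ M) (hY : H.OnRay M A' Y) (hYM : Y ≠ M) :
    H.btw X M Y := by
  have h1 : H.btw X M A' := btw_ray_opp hX hXM hb
  exact H.btw_symm Y M X (btw_ray_opp hY hYM (H.btw_symm X M A' h1))

lemma exists_onRay_dist {A B : H.Point} (hAB : A ≠ B) {r : ℝ} (hr : 0 < r) :
    ∃ C, H.OnRay A B C ∧ H.dist A C = r ∧ C ≠ A := by
  obtain ⟨C, hray, hd⟩ := H.seg_construct A B hAB r hr
  refine ⟨C, hray, hd, fun e => ?_⟩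
  rw [e, H.dist_self] at hd
  linarith

lemma exists_extend_dist {X M : H.Point} (hXM : X ≠ M) {r : ℝ} (hr : 0 < r) :
    ∃ Y, H.btw X M Y ∧ H.dist M Y = r := by
  obtain ⟨W, hW⟩ := H.btw_extend X M hXM
  obtain ⟨C, hray, hd, _⟩ := exists_onRay_dist (btw_ne23 hW) hr
  exact ⟨C, btw_ray_extend hW hray, hd⟩

lemma exists_midpoint {A B : H.Point} (hAB : A ≠ B) :
    ∃ M, H.btw A M B ∧ H.dist A M = H.dist M B := by
  have hd := H.dist_pos A B hAB
  obtain ⟨M, hray, hAM⟩ := H.seg_construct A B hAB (H.dist A B / 2) (by linarith)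
  rcases hray with rfl | h | h
  · exfalso; linarith
  · have e := H.dist_btw_add A M B h
    exact ⟨M, h, by linarith⟩
  · exfalso
    have e := H.dist_btw_add A B M h
    have := H.dist_pos B M (btw_ne23 h)
    linarith

lemma angle_ray' {A B C B' C' : H.Point} (hB : H.OnRay A B B') (hC : H.OnRay A C C') :
    H.angle B A C = H.angle B' A C' :=
  H.angle_ray_invariant A B C B' C' hB hC

lemma angle_pos' {A B C : H.Point} (h : H.NCol A B C) : 0 < H.angle A B C :=
  H.angle_pos A B C h

end HilbertPlane
namespace HilbertPlane

variable {H : HilbertPlane}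

/-- Congruent angles have congruent supplements (Hilbert / Hartshorne),
given matching distances along the rays. -/
lemma suppl {A B C D A' B' C' D' : H.Point}
    (hb : H.btw B A C) (hb' : H.btw B' A' C')
    (hnc : H.NCol B A D) (hnc' : H.NCol B' A' D')
    (dAB : H.dist A B = H.dist A' B') (dAC : H.dist A C = H.dist A' C')
    (dAD : H.dist A D = H.dist A' D')
    (hang : H.angle D A B = H.angle D' A' B') :
    H.angle D A C = H.angle D' A' C' := by
  have hBA : B ≠ A := btw_ne12 hb
  have hAC0 : A ≠ C := btw_ne23 hb
  have hBC : B ≠ C := btw_ne13 hb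
  have hBA' : B' ≠ A' := btw_ne12 hb'
  have hAC0' : A' ≠ C' := btw_ne23 hb'
  have hBC' : B' ≠ C' := btw_ne13 hb'
  obtain ⟨g, hBg, hAg, hCg⟩ := H.btw_collinear B A C hb
  obtain ⟨g', hBg', hAg', hCg'⟩ := H.btw_collinear B' A' C' hb'
  have hDg : ¬ H.onLine D g := fun h => hnc g ⟨hBg, hAg, h⟩
  have hDg' : ¬ H.onLine D' g' := fun h => hnc' g' ⟨hBg', hAg', h⟩
  have e := H.dist_btw_add B A C hb
  have e' := H.dist_btw_add B' A' C' hb'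
  -- step 1 : triangles (A, D, B) ≅ (A', D', B')
  have nc1 : H.NCol A D B := fun m h =>
    hDg (H.line_unique A B m g (Ne.symm hBA) h.1 h.2.2 hAg hBg ▸ h.2.1)
  have nc1' : H.NCol A' D' B' := fun m h =>
    hDg' (H.line_unique A' B' m g' (Ne.symm hBA') h.1 h.2.2 hAg' hBg' ▸ h.2.1)
  obtain ⟨dDB, -, aABD⟩ := H.sas A D B A' D' B' nc1 nc1' dAD dAB hang
  -- step 2 : triangles (B, D, C) ≅ (B', D', C')
  have nc2 : H.NCol B D C := fun m h =>
    hDg (H.line_unique B C m g hBC h.1 h.2.2 hBg hCg ▸ h.2.1)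
  have nc2' : H.NCol B' D' C' := fun m h =>
    hDg' (H.line_unique B' C' m g' hBC' h.1 h.2.2 hBg' hCg' ▸ h.2.1)
  have hDBC : H.angle D B C = H.angle D' B' C' := by
    have r1 : H.angle D B C = H.angle D B A :=
      angle_ray' (onRay_refl) (Or.inr (Or.inl hb))
    have r2 : H.angle D' B' C' = H.angle D' B' A' :=
      angle_ray' (onRay_refl) (Or.inr (Or.inl hb'))
    rw [r1, r2, H.angle_symm D B A, H.angle_symm D' B' A']
    exact aABD
  have dBD : H.dist B D = H.dist B' D' := by
    rw [H.dist_symm B D, H.dist_symm B' D']; exact dDB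
  have dBC : H.dist B C = H.dist B' C' := by
    have s1 := H.dist_symm B A
    have s2 := H.dist_symm B' A'
    linarith
  obtain ⟨dDC, -, aBCD⟩ := H.sas B D C B' D' C' nc2 nc2' dBD dBC hDBC
  -- step 3 : triangles (C, D, A) ≅ (C', D', A')
  have nc3 : H.NCol C D A := fun m h =>
    hDg (H.line_unique C A m g (Ne.symm hAC0) h.1 h.2.2 hCg hAg ▸ h.2.1)
  have nc3' : H.NCol C' D' A' := fun m h =>
    hDg' (H.line_unique C' A' m g' (Ne.symm hAC0') h.1 h.2.2 hCg' hAg' ▸ h.2.1)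
  have hDCA : H.angle D C A = H.angle D' C' A' := by
    have r1 : H.angle D C A = H.angle D C B :=
      angle_ray' (onRay_refl) (Or.inr (Or.inr (H.btw_symm B A C hb)))
    have r2 : H.angle D' C' A' = H.angle D' C' B' :=
      angle_ray' (onRay_refl) (Or.inr (Or.inr (H.btw_symm B' A' C' hb')))
    rw [r1, r2, H.angle_symm D C B, H.angle_symm D' C' B']
    exact aBCD
  have dCD : H.dist C D = H.dist C' D' := by
    rw [H.dist_symm C D, H.dist_symm C' D']; exact dDC
  have dCA : H.dist C A = H.dist C' A' := by
    rw [H.dist_symm C A, H.dist_symm C' A']; exact dAC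
  obtain ⟨-, -, aCAD⟩ := H.sas C D A C' D' A' nc3 nc3' dCD dCA hDCA
  rw [H.angle_symm D A C, H.angle_symm D' A' C']
  exact aCAD

/-- Vertical angles are equal. -/
lemma vertical {M A B A' B' : H.Point} (hA : H.btw A M A') (hB : H.btw B M B')
    (hnc : H.NCol A M B) : H.angle A M B = H.angle A' M B' := by
  have hAM : A ≠ M := btw_ne12 hA
  have hMA' : M ≠ A' := btw_ne23 hA
  have hBM : B ≠ M := btw_ne12 hB
  have hMB' : M ≠ B' := btw_ne23 hB
  obtain ⟨A1, rA, dA, hA1M⟩ := exists_onRay_dist (H := H) (Ne.symm hAM) one_pos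
  obtain ⟨A2, rA', dA', hA2M⟩ := exists_onRay_dist (H := H) hMA' one_pos
  obtain ⟨B1, rB, dB, hB1M⟩ := exists_onRay_dist (H := H) (Ne.symm hBM) one_pos
  obtain ⟨B2, rB', dB', hB2M⟩ := exists_onRay_dist (H := H) hMB' one_pos
  have hbA : H.btw A1 M A2 := btw_transfer hA rA hA1M rA' hA2M
  have hbB : H.btw B1 M B2 := btw_transfer hB rB hB1M rB' hB2M
  obtain ⟨lMA, hMa, hAa⟩ := H.line_exists M A (Ne.symm hAM)
  obtain ⟨lMB, hMb, hBb⟩ := H.line_exists M B (Ne.symm hBM)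
  have hA1a : H.onLine A1 lMA := onRay_mem rA hMa hAa
  have hB'b : H.onLine B' lMB := btw_mem_right hB hBb hMb
  have hB2b : H.onLine B2 lMB := onRay_mem rB' hMb hB'b
  have hBnotA : ¬ H.onLine B lMA := fun h => hnc lMA ⟨hAa, hMa, h⟩
  have hlab : lMA ≠ lMB := fun e => hBnotA (e ▸ hBb)
  have ncn : H.NCol A1 M B2 := by
    rintro m ⟨hm1, hm2, hm3⟩
    have hmeq : m = lMA := H.line_unique A1 M m lMA hA1M hm1 hm2 hA1a hMa
    have : H.onLine B2 lMA := hmeq ▸ hm3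
    exact hB2M (inter_unique hlab this hB2b hMa hMb)
  have ncn' : H.NCol B2 M A1 := fun m h => ncn m ⟨h.2.2, h.2.1, h.1⟩
  have concl := suppl hbA (H.btw_symm B1 M B2 hbB) ncn ncn'
    (by rw [dA, dB']) (by rw [dA', dB]) (by rw [dB', dA])
    (H.angle_symm B2 M A1)
  -- concl : angle B2 M A2 = angle A1 M B1
  have t1 : H.angle A M B = H.angle A1 M B1 := angle_ray' rA rB
  have t2 : H.angle A' M B' = H.angle A2 M B2 := angle_ray' rA' rB'
  rw [t1, t2, H.angle_symm A2 M B2]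
  exact concl.symm

end HilbertPlane
namespace HilbertPlane

variable {H : HilbertPlane}

/-- Exterior angle theorem (Euclid I.16): in a triangle `ABC`, the exterior
angle at `C` (towards `D` with `B−C−D`) exceeds the interior angle at `A`. -/
lemma ext_angle {A B C D : H.Point} {g : H.Line}
    (hBg : H.onLine B g) (hCg : H.onLine C g) (hAg : ¬ H.onLine A g)
    (hBC : B ≠ C) (hD : H.btw B C D) :
    H.angle B A C < H.angle A C D := by
  have hAC : A ≠ C := fun e => hAg (e ▸ hCg)
  have hAB : A ≠ B := fun e => hAg (e ▸ hBg)
  have hCD : C ≠ D := btw_ne23 hD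
  have hDg : H.onLine D g := btw_mem_right hD hBg hCg
  -- the line AC
  obtain ⟨k, hAk, hCk⟩ := H.line_exists A C hAC
  have hkg : k ≠ g := fun e => hAg (e ▸ hAk)
  have hBk : ¬ H.onLine B k := fun h => hBC (inter_unique hkg h hBg hCk hCg)
  have hDk : ¬ H.onLine D k := fun h => hCD ((inter_unique hkg h hDg hCk hCg)).symm
  -- midpoint E of AC, and F with B−E−F, EF = EB
  obtain ⟨E, hE, hEd⟩ := exists_midpoint hAC
  have hEk : H.onLine E k := btw_mem hE hAk hCk
  have hEg : ¬ H.onLine E g := by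
    intro h
    exact (btw_ne23 hE) (inter_unique hkg hEk h hCk hCg)
  have hBE : B ≠ E := fun e => hBk (e ▸ hEk)
  obtain ⟨F, hF, hFd⟩ := exists_extend_dist hBE (H.dist_pos E B (Ne.symm hBE))
  obtain ⟨lBE, hBl, hEl⟩ := H.line_exists B E hBE
  have hFl : H.onLine F lBE := btw_mem_right hF hBl hEl
  have hlk : lBE ≠ k := fun e => hBk (e ▸ hBl)
  have hlg : lBE ≠ g := fun e => hEg (e ▸ hEl)
  have hFk : ¬ H.onLine F k := fun h =>
    (btw_ne23 hF) (inter_unique hlk hFl h hEl hEk).symm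
  have hFg : ¬ H.onLine F g := fun h =>
    (btw_ne13 hF) (inter_unique hlg hFl h hBl hBg).symm
  -- vertical angles at E and SAS
  have ncAEB : H.NCol A E B := fun m h =>
    hBk (H.line_unique A E m k (btw_ne12 hE) h.1 h.2.1 hAk hEk ▸ h.2.2)
  have hvert : H.angle A E B = H.angle C E F := vertical hE hF ncAEB
  have ncEAB : H.NCol E A B := fun m h => ncAEB m ⟨h.2.1, h.1, h.2.2⟩
  have ncECF : H.NCol E C F := fun m h =>
    hFk (H.line_unique E C m k (btw_ne23 hE) h.1 h.2.1 hEk hCk ▸ h.2.2)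
  have dEA : H.dist E A = H.dist E C := by
    have s := H.dist_symm A E; linarith [hEd]
  have dEB : H.dist E B = H.dist E F := by
    rw [hFd]
  obtain ⟨-, aEAB, -⟩ := H.sas E A B E C F ncEAB ncECF dEA dEB hvert
  -- aEAB : angle E A B = angle E C F
  have hBAC : H.angle B A C = H.angle A C F := by
    have r1 : H.angle B A C = H.angle B A E :=
      angle_ray' onRay_refl (Or.inr (Or.inl hE))
    have r2 : H.angle E C F = H.angle A C F :=
      angle_ray' (Or.inr (Or.inr (H.btw_symm A E C hE))) onRay_refl
    rw [r1, ← r2, H.angle_symm B A E]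
    exact aEAB
  -- F and D are on the same side of k = line AC
  have sFD : H.SameSide k F D := by
    have ncFBD : H.NCol F B D := by
      rintro m ⟨hm1, hm2, hm3⟩
      have : m = g := H.line_unique B D m g (btw_ne13 hD) hm2 hm3 hBg hDg
      exact hFg (this ▸ hm1)
    exact sameSide_of_cross_cross hBk hFk hDk ncFBD hEk hF hCk hD
  -- F and A are on the same side of g = line BC
  have sFA : H.SameSide g F A := by
    have sAE : H.SameSide g A E := by
      refine ⟨hAg, hEg, ?_⟩
      rintro ⟨Z, hZ, hb⟩
      have hZk : H.onLine Z k := btw_mem hb hAk hEk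
      have : Z = C := inter_unique hkg hZk hZ hCk hCg
      exact btw_asymm2 hE (this ▸ hb)
    have sEF : H.SameSide g E F := by
      refine ⟨hEg, hFg, ?_⟩
      rintro ⟨Z, hZ, hb⟩
      have hZl : H.onLine Z lBE := btw_mem hb hEl hFl
      have : Z = B := inter_unique hlg hZl hZ hBl hBg
      exact H.btw_not_rotate B E F hF (this ▸ hb)
    exact sameSide_symm (sameSide_trans sAE sEF)
  -- angle addition at C
  have hCF : C ≠ F := fun e => hFk (e ▸ hCk)
  have hadd := H.angle_add C A D F (Ne.symm hAC) hCD hCF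
    (fun l hCl hAl => by
      have : l = k := H.line_unique C A l k (Ne.symm hAC) hCl hAl hCk hAk
      exact this ▸ ⟨sFD.1, sFD.2.1, sFD.2.2⟩)
    (fun l hCl hDl => by
      have : l = g := H.line_unique C D l g hCD hCl hDl hCg hDg
      exact this ▸ ⟨sFA.1, hAg, sFA.2.2⟩)
  -- hadd : angle A C F + angle F C D = angle A C D
  have hpos : 0 < H.angle F C D := by
    refine angle_pos' (fun m h => ?_)
    have : m = g := H.line_unique C D m g hCD h.2.1 h.2.2 hCg hDg
    exact hFg (this ▸ h.1)
  rw [hBAC]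
  linarith [hadd]

end HilbertPlane

open HilbertPlane
/-- In a Hilbert plane, for every line `a` and point `A` not on `a` there is at
least one line through `A` not meeting `a` (existence of parallels in neutral
geometry, Euclid I.31). -/
theorem exists_parallel_neutral (H : HilbertPlane)
    (a : H.Line) (A : H.Point) (hA : ¬ H.onLine A a) :
    ∃ m : H.Line, H.onLine A m ∧ ¬ H.LinesMeet m a := by
  obtain ⟨P, Q, hPQ, hPa, hQa⟩ := H.line_two_points a
  have hAP : A ≠ P := fun e => hA (e ▸ hPa)
  obtain ⟨t, hAt, hPt⟩ := H.line_exists A P hAP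
  have hta : t ≠ a := fun e => hA (e ▸ hAt)
  have hQt : ¬ H.onLine Q t := fun h => hPQ (inter_unique hta hPt hPa h hQa)
  -- midpoint M of AP, and the reflection Q' of Q through M
  obtain ⟨M, hM, hMd⟩ := exists_midpoint hAP
  have hMt : H.onLine M t := btw_mem hM hAt hPt
  have hQM : Q ≠ M := fun e => hQt (e ▸ hMt)
  obtain ⟨Q', hQ', hQ'd⟩ := exists_extend_dist hQM (H.dist_pos M Q (Ne.symm hQM))
  have hQ't : ¬ H.onLine Q' t := fun h => hQt (btw_mem_left hQ' hMt h)
  have hAQ' : A ≠ Q' := fun e => hQ't (e ▸ hAt)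
  have hQ'a : ¬ H.onLine Q' a := by
    intro h
    have hMa : H.onLine M a := btw_mem hQ' hQa h
    exact (btw_ne23 hM) (inter_unique hta hMt hMa hPt hPa)
  obtain ⟨m, hAm, hQ'm⟩ := H.line_exists A Q' hAQ'
  have hmt : m ≠ t := fun e => hQ't (e ▸ hQ'm)
  refine ⟨m, hAm, ?_⟩
  rintro ⟨X, hXm, hXa⟩
  -- alternate angles: ∠APQ = ∠PAQ'
  have hAM : A ≠ M := btw_ne12 hM
  have hMP : M ≠ P := btw_ne23 hM
  have ncPMQ : H.NCol P M Q := fun l h =>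
    hQt (H.line_unique P M l t (Ne.symm hMP) h.1 h.2.1 hPt hMt ▸ h.2.2)
  have hvert : H.angle P M Q = H.angle A M Q' :=
    vertical (H.btw_symm A M P hM) hQ' ncPMQ
  have ncMPQ : H.NCol M P Q := fun l h => ncPMQ l ⟨h.2.1, h.1, h.2.2⟩
  have ncMAQ' : H.NCol M A Q' := fun l h =>
    hQ't (H.line_unique M A l t (Ne.symm hAM) h.1 h.2.1 hMt hAt ▸ h.2.2)
  have dMP : H.dist M P = H.dist M A := by
    have s1 := H.dist_symm A M; linarith [hMd]
  have dMQ : H.dist M Q = H.dist M Q' := hQ'd.symm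
  obtain ⟨-, aMPQ, -⟩ := H.sas M P Q M A Q' ncMPQ ncMAQ' dMP dMQ hvert
  have beta : H.angle A P Q = H.angle P A Q' := by
    have r1 : H.angle M P Q = H.angle A P Q :=
      angle_ray' (Or.inr (Or.inr (H.btw_symm A M P hM))) onRay_refl
    have r2 : H.angle M A Q' = H.angle P A Q' :=
      angle_ray' (Or.inr (Or.inr hM)) onRay_refl
    rw [← r1, ← r2]; exact aMPQ
  -- basic facts about X
  have hXP : X ≠ P := by
    rintro rfl
    have hmt' : m = t := H.line_unique A X m t (fun e => hA (e ▸ hXa)) hAm hXm hAt hPt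
    exact hQ't (hmt' ▸ hQ'm)
  have hXt : ¬ H.onLine X t := fun h => hXP (inter_unique hta h hXa hPt hPa)
  have hXA : X ≠ A := fun e => hA (e ▸ hXa)
  have hXQ' : X ≠ Q' := fun e => hQ'a (e ▸ hXa)
  have hXQ : X ≠ Q := by
    rintro rfl
    have hMm : H.onLine M m := btw_mem hQ' hXm hQ'm
    exact hAM (inter_unique hmt hAm hAt hMm hMt)
  by_cases hside : ∃ Z, H.onLine Z t ∧ H.btw X Z Q
  · -- X is on the opposite side of t from Q
    obtain ⟨Z, hZt, hZb⟩ := hside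
    have hZa : H.onLine Z a := btw_mem hZb hXa hQa
    have hXPQ : H.btw X P Q := inter_unique hta hZt hZa hPt hPa ▸ hZb
    -- hence X, Q' are on the same side of t
    have sXQ' : H.SameSide t X Q' := by
      have ncXQQ' : H.NCol X Q Q' := by
        rintro l ⟨hl1, hl2, hl3⟩
        exact hQ'a (H.line_unique X Q l a hXQ hl1 hl2 hXa hQa ▸ hl3)
      exact sameSide_of_cross_cross hQt hXt hQ't ncXQQ' hPt
        (H.btw_symm X P Q hXPQ) hMt hQ'
    -- X is on the ray from A through Q'
    have hray : H.OnRay A Q' X := by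
      rcases btw_tri hXm hAm hQ'm hXA (fun e => hQ't (e ▸ hAt)) hXQ' with h | h | h
      · exact absurd ⟨A, hAt, h⟩ sXQ'.2.2
      · exact Or.inr (Or.inl h)
      · exact Or.inr (Or.inr (H.btw_symm X Q' A h))
    have hPAX : H.angle P A X = H.angle P A Q' := (angle_ray' onRay_refl hray).symm
    -- exterior angle theorem in triangle A X P, exterior angle at P
    have hlt := ext_angle hXa hPa hA hXP hXPQ
    -- hlt : ∠ X A P < ∠ A P Q
    rw [H.angle_symm X A P, hPAX, ← beta] at hlt
    exact lt_irrefl _ hlt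
  · -- X is on the same side of t as Q
    have sXQ : H.SameSide t X Q := ⟨hXt, hQt, hside⟩
    have hcross : ∃ Z, H.onLine Z t ∧ H.btw X Z Q' := by
      by_contra hno
      have hs : H.SameSide t X Q' := ⟨hXt, hQ't, hno⟩
      exact (sameSide_trans (sameSide_symm sXQ) hs).2.2 ⟨M, hMt, hQ'⟩
    obtain ⟨Z, hZt, hZb⟩ := hcross
    have hZm : H.onLine Z m := btw_mem hZb hXm hQ'm
    have hXAQ' : H.btw X A Q' := inter_unique hmt hZm hZt hAm hAt ▸ hZb
    -- X is on the ray from P through Q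
    have hray : H.OnRay P Q X := by
      rcases btw_tri hXa hPa hQa hXP hPQ hXQ with h | h | h
      · exact absurd ⟨P, hPt, h⟩ hside
      · exact Or.inr (Or.inl h)
      · exact Or.inr (Or.inr (H.btw_symm X Q P h))
    have hAPX : H.angle A P Q = H.angle A P X := angle_ray' onRay_refl hray
    have hPm : ¬ H.onLine P m := fun h =>
      hmt (H.line_unique A P m t hAP hAm h hAt hPt)
    have hlt := ext_angle hXm hAm hPm hXA hXAQ'
    -- hlt : ∠ X P A < ∠ P A Q'
    rw [H.angle_symm X P A, ← hAPX, beta] at hlt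
    exact lt_irrefl _ hlt
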